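/- arXiv:2202.02525 — 2 statements merged into one kernel-verified Lean document; each statement's English description precedes it below -/
import Mathlib

section
/- The set of parameters λ > 0 for which the generalized Chern–Simons equation Δu = λ e^u (e^u − 1)^5 + 4π Σ_{s=1}^N δ_{p_s} has a solution is upward closed: if the equation has a solution for λ_0 > 0 and λ ≥ λ_0, then it has a solution for λ. -/
open Real

/-- The graph Laplacian: `Δu(x) = (1/μ(x)) Σ_y w(x,y)(u(y) − u(x))`. -/
noncomputable def lapl {V : Type*} [Fintype V] (μ : V → ℝ) (w : V → V → ℝ) (u : V → ℝ) (x : V) : ℝ :=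
  (1 / μ x) * ∑ y, w x y * (u y - u x)

/-- The integral on the graph: `∫_V f dμ = Σ_x μ(x) f(x)`. -/
noncomputable def integ {V : Type*} [Fintype V] (μ : V → ℝ) (f : V → ℝ) : ℝ := ∑ x, μ x * f x

/-- The volume of the graph: `Vol(V) = Σ_x μ(x)`. -/
noncomputable def vol {V : Type*} [Fintype V] (μ : V → ℝ) : ℝ := ∑ x, μ x

/-- The Dirac mass at `p`. -/
noncomputable def dirac {V : Type*} [DecidableEq V] (μ : V → ℝ) (p x : V) : ℝ :=
  if x = p then 1 / μ p else 0

/-- The squared length of the gradient: `|∇u|²(x) = (1/(2μ(x))) Σ_y w(x,y)(u(y) − u(x))²`. -/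
noncomputable def gradSq {V : Type*} [Fintype V] (μ : V → ℝ) (w : V → V → ℝ) (u : V → ℝ) (x : V) : ℝ :=
  (1 / (2 * μ x)) * ∑ y, w x y * (u y - u x) ^ 2

/-- The gradient form `Γ(u,φ)(x) = (1/(2μ(x))) Σ_y w(x,y)(u(y) − u(x))(φ(y) − φ(x))`. -/
noncomputable def gamma {V : Type*} [Fintype V] (μ : V → ℝ) (w : V → V → ℝ) (u φ : V → ℝ) (x : V) : ℝ :=
  (1 / (2 * μ x)) * ∑ y, w x y * (u y - u x) * (φ y - φ x)

/-- `u` solves the generalized Chern–Simons equation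
    `Δu = λ e^u (e^u − 1)^5 + 4π Σ_s δ_{p_s}` with parameter `lam`. -/
noncomputable def isSol {V : Type*} [Fintype V] [DecidableEq V] (μ : V → ℝ) (w : V → V → ℝ)
    {N : ℕ} (p : Fin N → V) (lam : ℝ) (u : V → ℝ) : Prop :=
  ∀ x, lapl μ w u x =
    lam * Real.exp (u x) * (Real.exp (u x) - 1) ^ 5 + 4 * π * ∑ s, dirac μ (p s) x

/-- The energy functional
    `I_λ(v) = ∫_V [ (1/2)|∇v|² + (λ/6)(e^{u₀+v} − 1)^6 + (4πN/Vol(V)) v ] dμ`. -/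
noncomputable def energy {V : Type*} [Fintype V] (μ : V → ℝ) (w : V → V → ℝ)
    (u0 : V → ℝ) (N : ℕ) (lam : ℝ) (v : V → ℝ) : ℝ :=
  integ μ (fun x => (1 / 2) * gradSq μ w v x
    + (lam / 6) * (Real.exp (u0 x + v x) - 1) ^ 6 + (4 * π * N / vol μ) * v x)

/-- The Sobolev `W^{1,2}` norm `(∫_V (|∇v|² + v²) dμ)^{1/2}`. -/
noncomputable def sobNorm {V : Type*} [Fintype V] (μ : V → ℝ) (w : V → V → ℝ)
    (v : V → ℝ) : ℝ :=
  Real.sqrt (integ μ (fun x => gradSq μ w v x + v x ^ 2))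

/-- The derivative of the energy functional at `v` in direction `φ`:
    `∫_V Γ(v,φ) dμ + λ ∫_V e^{u₀+v}(e^{u₀+v} − 1)^5 φ dμ + (4πN/Vol(V)) ∫_V φ dμ`. -/
noncomputable def dEnergy {V : Type*} [Fintype V] (μ : V → ℝ) (w : V → V → ℝ)
    (u0 : V → ℝ) (N : ℕ) (lam : ℝ) (v φ : V → ℝ) : ℝ :=
  integ μ (gamma μ w v φ)
    + lam * integ μ (fun x => Real.exp (u0 x + v x) * (Real.exp (u0 x + v x) - 1) ^ 5 * φ x)
    + (4 * π * N / vol μ) * integ μ φ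


noncomputable def gfun (t : ℝ) : ℝ := Real.exp t * (Real.exp t - 1) ^ 5

lemma gfun_nonpos {t : ℝ} (ht : t ≤ 0) : gfun t ≤ 0 := by
  have h1 : Real.exp t ≤ 1 := Real.exp_le_one_iff.mpr ht
  have h2 : (Real.exp t - 1) ^ 5 ≤ 0 := Odd.pow_nonpos (by decide) (by linarith)
  have := Real.exp_pos t
  exact mul_nonpos_of_nonneg_of_nonpos this.le h2

lemma hasDerivAt_gfun (t : ℝ) : HasDerivAt gfun
    (Real.exp t * (Real.exp t - 1) ^ 5 + Real.exp t * (5 * (Real.exp t - 1) ^ 4 * Real.exp t)) t := by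
  have h1 := Real.hasDerivAt_exp t
  have h2 : HasDerivAt (fun s => (Real.exp s - 1) ^ 5) (5 * (Real.exp t - 1) ^ 4 * Real.exp t) t := by
    have := (h1.sub_const 1).pow 5
    norm_num at this
    exact this
  exact h1.mul h2

lemma f_mono : MonotoneOn (fun t => 6 * t - gfun t) (Set.Iic (0:ℝ)) := by
  apply monotoneOn_of_deriv_nonneg (convex_Iic 0)
  · apply Continuous.continuousOn
    unfold gfun; fun_prop
  · intro x hx
    exact (((hasDerivAt_id x).const_mul 6).sub (hasDerivAt_gfun x)).differentiableAt.differentiableWithinAt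
  · intro x hx
    rw [interior_Iic] at hx
    have hd : HasDerivAt (fun t => 6 * t - gfun t)
        (6 - (Real.exp x * (Real.exp x - 1) ^ 5 + Real.exp x * (5 * (Real.exp x - 1) ^ 4 * Real.exp x))) x := by
      have := (((hasDerivAt_id x).const_mul 6).sub (hasDerivAt_gfun x))
      simp only [mul_one] at this
      exact this
    rw [hd.deriv]
    have hs : 0 < Real.exp x := Real.exp_pos x
    have hs1 : Real.exp x ≤ 1 := Real.exp_le_one_iff.mpr hx.le
    set s := Real.exp x
    have h2 : (s - 1) ^ 2 ≤ 1 := by nlinarith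
    have h4 : (s - 1) ^ 4 ≤ 1 := by nlinarith [sq_nonneg ((s-1)^2)]
    have key : s * (s - 1) ^ 5 + s * (5 * (s - 1) ^ 4 * s) ≤ 6 := by
      have hfact : s * (s - 1) ^ 5 + s * (5 * (s - 1) ^ 4 * s) = (s * (s - 1) ^ 4) * (6 * s - 1) := by
        ring
      rw [hfact]
      rcases le_or_gt (6 * s - 1) 0 with h | h
      · have : (s * (s - 1) ^ 4) * (6 * s - 1) ≤ 0 :=
          mul_nonpos_of_nonneg_of_nonpos (by positivity) h
        linarith
      · have hp4 : (0:ℝ) ≤ (s - 1) ^ 4 := by positivity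
        have h1 : s * (s - 1) ^ 4 ≤ 1 := by nlinarith
        nlinarith
    linarith

section Graph
set_option linter.unusedSectionVars false

variable {V : Type*} [Fintype V] [Nonempty V] (μ : V → ℝ) (w : V → V → ℝ)

lemma lapl_nonneg_at_min (hmu : ∀ x, 0 < μ x) (hnn : ∀ x y, 0 ≤ w x y)
    (u : V → ℝ) (x0 : V) (hx0 : ∀ y, u x0 ≤ u y) : 0 ≤ lapl μ w u x0 := by
  unfold lapl
  apply mul_nonneg (by have := hmu x0; positivity)
  exact Finset.sum_nonneg fun y _ => mul_nonneg (hnn x0 y) (by linarith [hx0 y])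

lemma lapl_nonpos_at_max (hmu : ∀ x, 0 < μ x) (hnn : ∀ x y, 0 ≤ w x y)
    (u : V → ℝ) (x0 : V) (hx0 : ∀ y, u y ≤ u x0) : lapl μ w u x0 ≤ 0 := by
  unfold lapl
  apply mul_nonpos_of_nonneg_of_nonpos (by have := hmu x0; positivity)
  exact Finset.sum_nonpos fun y _ =>
    mul_nonpos_of_nonneg_of_nonpos (hnn x0 y) (by linarith [hx0 y])

/-- The operator `u ↦ K u − Δu` as a linear map. -/
noncomputable def Gop (K : ℝ) : (V → ℝ) →ₗ[ℝ] (V → ℝ) where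
  toFun u := fun x => K * u x - lapl μ w u x
  map_add' a b := by
    funext x
    simp only [lapl, Pi.add_apply]
    rw [show ∑ y, w x y * ((a y + b y) - (a x + b x))
        = ∑ y, (w x y * (a y - a x) + w x y * (b y - b x)) from
      Finset.sum_congr rfl fun y _ => by ring, Finset.sum_add_distrib]
    ring
  map_smul' c a := by
    funext x
    simp only [lapl, Pi.smul_apply, smul_eq_mul, RingHom.id_apply]
    rw [show ∑ y, w x y * (c * a y - c * a x) = c * ∑ y, w x y * (a y - a x) by
      rw [Finset.mul_sum]; exact Finset.sum_congr rfl fun y _ => by ring]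
    ring

lemma Gop_apply (K : ℝ) (u : V → ℝ) (x : V) :
    Gop μ w K u x = K * u x - lapl μ w u x := rfl

/-- Comparison principle: if `K u − Δu ≥ 0` then `u ≥ 0`. -/
lemma comparison (hmu : ∀ x, 0 < μ x) (hnn : ∀ x y, 0 ≤ w x y) {K : ℝ} (hK : 0 < K)
    (h : V → ℝ) (hh : ∀ x, 0 ≤ Gop μ w K h x) : ∀ x, 0 ≤ h x := by
  obtain ⟨x0, -, hx0⟩ := Finset.exists_min_image Finset.univ h ⟨Classical.arbitrary V, Finset.mem_univ _⟩
  have h1 : 0 ≤ lapl μ w h x0 :=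
    lapl_nonneg_at_min μ w hmu hnn h x0 fun y => hx0 y (Finset.mem_univ y)
  have h2 := hh x0
  rw [Gop_apply] at h2
  have h3 : 0 ≤ h x0 := by
    have : 0 ≤ K * h x0 := by linarith
    exact nonneg_of_mul_nonneg_right this hK
  exact fun x => le_trans h3 (hx0 x (Finset.mem_univ x))

lemma Gop_surjective (hmu : ∀ x, 0 < μ x) (hnn : ∀ x y, 0 ≤ w x y) {K : ℝ} (hK : 0 < K) :
    Function.Surjective (Gop μ w K) := by
  rw [← LinearMap.injective_iff_surjective]
  intro a b hab
  have hz : Gop μ w K (a - b) = 0 := by rw [map_sub, hab, sub_self]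
  have h1 : ∀ x, 0 ≤ (a - b) x := comparison μ w hmu hnn hK _ fun x => by rw [hz]; simp
  have h2 : ∀ x, 0 ≤ (b - a) x := comparison μ w hmu hnn hK _ fun x => by
    have : Gop μ w K (b - a) = 0 := by rw [map_sub, hab, sub_self]
    rw [this]; simp
  funext x
  have := h1 x; have := h2 x
  simp only [Pi.sub_apply] at *
  linarith

end Graph

/-- the set of parameters `λ > 0` for which the generalized Chern–Simons
equation has a solution is upward closed. -/
theorem solvable_upward_closed {V : Type*} [Fintype V] [DecidableEq V] [Nonempty V]
    (w : V → V → ℝ) (μ : V → ℝ)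
    (hsymm : ∀ x y, w x y = w y x) (hnn : ∀ x y, 0 ≤ w x y)
    (hconn : ∀ x y : V, Relation.ReflTransGen (fun a b => 0 < w a b) x y)
    (hmu : ∀ x, 0 < μ x)
    (N : ℕ) (hN : 1 ≤ N) (p : Fin N → V) (hp : Function.Injective p)
    (lam0 lam : ℝ) (hlam0 : 0 < lam0) (hle : lam0 ≤ lam)
    (u : V → ℝ) (hu : isSol μ w p lam0 u) :
    ∃ u' : V → ℝ, isSol μ w p lam u' := by
  classical
  have hlam : 0 < lam := lt_of_lt_of_le hlam0 hle
  have hπ := Real.pi_pos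
  set d : V → ℝ := fun x => 4 * π * ∑ s, dirac μ (p s) x with hd
  have hdnn : ∀ x, 0 ≤ d x := by
    intro x
    have hs : 0 ≤ ∑ s, dirac μ (p s) x := by
      apply Finset.sum_nonneg
      intro s _
      unfold dirac
      split
      · have := hmu (p s); positivity
      · exact le_rfl
    have : d x = 4 * π * ∑ s, dirac μ (p s) x := rfl
    rw [this]
    positivity
  -- the given solution is nonpositive (maximum principle)
  have hu0 : ∀ x, u x ≤ 0 := by
    obtain ⟨x0, -, hx0⟩ := Finset.exists_max_image Finset.univ u
      ⟨Classical.arbitrary V, Finset.mem_univ _⟩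
    have h1 : lapl μ w u x0 ≤ 0 :=
      lapl_nonpos_at_max μ w hmu hnn u x0 fun y => hx0 y (Finset.mem_univ y)
    have h2 := hu x0
    have hde : (4:ℝ) * π * ∑ s, dirac μ (p s) x0 = d x0 := rfl
    rw [hde] at h2
    have h3 : lam0 * Real.exp (u x0) * (Real.exp (u x0) - 1) ^ 5 ≤ 0 := by
      have := hdnn x0; linarith
    have h5 : Real.exp (u x0) ≤ 1 := by
      by_contra h
      push_neg at h
      have hp : 0 < (Real.exp (u x0) - 1) ^ 5 := pow_pos (by linarith) 5
      have : 0 < lam0 * Real.exp (u x0) * (Real.exp (u x0) - 1) ^ 5 := by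
        have := Real.exp_pos (u x0); positivity
      linarith
    have h6 : u x0 ≤ 0 := Real.exp_le_one_iff.mp h5
    exact fun x => le_trans (hx0 x (Finset.mem_univ x)) h6
  set K : ℝ := 6 * lam with hK
  have hKpos : 0 < K := by rw [hK]; positivity
  -- the iteration operator
  have hsurj := Gop_surjective μ w hmu hnn hKpos
  set F : (V → ℝ) → V → ℝ := fun v x => K * v x - lam * gfun (v x) - d x with hF
  choose next hnext using fun v => hsurj (F v)
  have hnext' : ∀ v x, K * next v x - lapl μ w (next v) x
      = K * v x - lam * gfun (v x) - d x := fun v x => congrFun (hnext v) x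
  have comp : ∀ h : V → ℝ, (∀ x, 0 ≤ K * h x - lapl μ w h x) → ∀ x, 0 ≤ h x :=
    fun h hh => comparison μ w hmu hnn hKpos h hh
  -- monotonicity of t ↦ K t - lam * gfun t on nonpositive reals
  have fm : ∀ a b : ℝ, a ≤ b → b ≤ 0 → K * a - lam * gfun a ≤ K * b - lam * gfun b := by
    intro a b hab hb0
    have h1 : 6 * a - gfun a ≤ 6 * b - gfun b :=
      f_mono (Set.mem_Iic.mpr (le_trans hab hb0)) (Set.mem_Iic.mpr hb0) hab
    have h2 := mul_le_mul_of_nonneg_left h1 hlam.le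
    have e : ∀ t : ℝ, K * t - lam * gfun t = lam * (6 * t - gfun t) := fun t => by
      rw [hK]; ring
    rw [e a, e b]; exact h2
  -- monotone iteration facts
  have next_mono : ∀ a b : V → ℝ, (∀ x, a x ≤ b x) → (∀ x, b x ≤ 0) →
      ∀ x, next a x ≤ next b x := by
    intro a b hab hb0
    have hz : Gop μ w K (next b - next a) = F b - F a := by
      rw [map_sub, hnext, hnext]
    have hge : ∀ x, 0 ≤ K * (next b - next a) x - lapl μ w (next b - next a) x := by
      intro x
      have h1 : K * (next b - next a) x - lapl μ w (next b - next a) x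
          = (F b - F a) x := congrFun hz x
      rw [h1]
      simp only [Pi.sub_apply, hF]
      have := fm (a x) (b x) (hab x) (hb0 x)
      linarith
    intro x
    have := comp (next b - next a) hge x
    simp only [Pi.sub_apply] at this
    linarith
  have next_le_zero : ∀ v : V → ℝ, (∀ x, v x ≤ 0) → ∀ x, next v x ≤ 0 := by
    intro v hv
    have hz : Gop μ w K (-(next v)) = -(F v) := by rw [map_neg, hnext]
    have hge : ∀ x, 0 ≤ K * (-(next v)) x - lapl μ w (-(next v)) x := by
      intro x
      have h1 : K * (-(next v)) x - lapl μ w (-(next v)) x = (-(F v)) x := congrFun hz x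
      rw [h1]
      simp only [Pi.neg_apply, hF]
      have h2 := fm (v x) 0 (hv x) le_rfl
      have h3 : gfun 0 = 0 := by simp [gfun]
      have := hdnn x
      rw [h3] at h2
      linarith
    intro x
    have := comp (-(next v)) hge x
    simp only [Pi.neg_apply] at this
    linarith
  have first : ∀ x, u x ≤ next u x := by
    have hz : Gop μ w K (next u - u) = F u - Gop μ w K u := by
      rw [map_sub, hnext]
    have hge : ∀ x, 0 ≤ K * (next u - u) x - lapl μ w (next u - u) x := by
      intro x
      have h1 : K * (next u - u) x - lapl μ w (next u - u) x
          = (F u - Gop μ w K u) x := congrFun hz x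
      rw [h1]
      simp only [Pi.sub_apply, hF, Gop_apply]
      have h2 := hu x
      have hde : (4:ℝ) * π * ∑ s, dirac μ (p s) x = d x := rfl
      rw [hde] at h2
      have h3 : lapl μ w u x = lam0 * gfun (u x) + d x := by
        rw [h2]; unfold gfun; ring
      rw [h3]
      have hg := gfun_nonpos (hu0 x)
      have h4 : 0 ≤ (lam - lam0) * (-gfun (u x)) :=
        mul_nonneg (by linarith) (by linarith)
      nlinarith
    intro x
    have := comp (next u - u) hge x
    simp only [Pi.sub_apply] at this
    linarith
  -- the iteration sequence
  set seq : ℕ → V → ℝ := fun n => next^[n] u with hseq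
  have hseq0 : seq 0 = u := rfl
  have hseqS : ∀ n, seq (n + 1) = next (seq n) := fun n =>
    Function.iterate_succ_apply' next n u
  have key : ∀ n, (∀ x, seq n x ≤ 0) ∧ (∀ x, seq n x ≤ seq (n + 1) x) := by
    intro n
    induction n with
    | zero =>
      constructor
      · exact hu0
      · intro x; rw [hseqS 0, hseq0]; exact first x
    | succ n ih =>
      have hA : ∀ x, seq (n + 1) x ≤ 0 := by
        intro x; rw [hseqS n]; exact next_le_zero (seq n) ih.1 x
      refine ⟨hA, ?_⟩
      intro x
      have h := next_mono (seq n) (seq (n + 1)) ih.2 hA x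
      rw [← hseqS n, ← hseqS (n + 1)] at h
      exact h
  -- pass to the limit
  set u' : V → ℝ := fun x => ⨆ n, seq n x with hu'
  have hmono : ∀ x, Monotone fun n => seq n x :=
    fun x => monotone_nat_of_le_succ fun n => (key n).2 x
  have hbdd : ∀ x, BddAbove (Set.range fun n => seq n x) := by
    intro x
    refine ⟨0, ?_⟩
    rintro y ⟨n, rfl⟩
    exact (key n).1 x
  have hlim : ∀ x, Filter.Tendsto (fun n => seq n x) Filter.atTop (nhds (u' x)) :=
    fun x => tendsto_atTop_ciSup (hmono x) (hbdd x)
  have hlim' : ∀ x, Filter.Tendsto (fun n => seq (n + 1) x) Filter.atTop (nhds (u' x)) :=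
    fun x => (hlim x).comp (Filter.tendsto_add_atTop_nat 1)
  refine ⟨u', ?_⟩
  intro x
  have hL : Filter.Tendsto (fun n => lapl μ w (seq (n + 1)) x) Filter.atTop
      (nhds (lapl μ w u' x)) := by
    unfold lapl
    exact tendsto_const_nhds.mul (tendsto_finset_sum _ fun y _ =>
      tendsto_const_nhds.mul ((hlim' y).sub (hlim' x)))
  have hgcont : Continuous gfun := by unfold gfun; fun_prop
  have hR : Filter.Tendsto
      (fun n => K * seq (n + 1) x - (K * seq n x - lam * gfun (seq n x) - d x))
      Filter.atTop (nhds (K * u' x - (K * u' x - lam * gfun (u' x) - d x))) :=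
    (tendsto_const_nhds.mul (hlim' x)).sub
      (((tendsto_const_nhds.mul (hlim x)).sub
        (tendsto_const_nhds.mul ((hgcont.tendsto _).comp (hlim x)))).sub tendsto_const_nhds)
  have heq : (fun n => lapl μ w (seq (n + 1)) x)
      = fun n => K * seq (n + 1) x - (K * seq n x - lam * gfun (seq n x) - d x) := by
    funext n
    have h := hnext' (seq n) x
    rw [← hseqS n] at h
    linarith
  rw [heq] at hL
  have hfin := tendsto_nhds_unique hL hR
  rw [hfin]
  have hde : d x = 4 * π * ∑ s, dirac μ (p s) x := rfl
  rw [hde]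
  unfold gfun
  ring
end

section
/- There exists λ̂ ≥ (6^6/5^5)·(4πN/Vol(V)) such that the generalized Chern–Simons equation Δu = λ e^u (e^u − 1)^5 + 4π Σ_{s=1}^N δ_{p_s} has a solution for every λ ≥ λ̂ and has no solution for any 0 < λ < λ̂. -/
open Real

set_option linter.unusedSectionVars false

section Aux

noncomputable def Fcs (t : ℝ) : ℝ := exp t * (exp t - 1) ^ 5

lemma Fcs_nonpos {t : ℝ} (ht : t ≤ 0) : Fcs t ≤ 0 := by
  have h1 : exp t ≤ 1 := exp_le_one_iff.mpr ht
  have : (exp t - 1) ^ 5 ≤ 0 := (Odd.pow_nonpos_iff (by decide)).mpr (by linarith)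
  exact mul_nonpos_of_nonneg_of_nonpos (exp_pos t).le this

lemma Fcs_lower (t : ℝ) : -(3125 / 46656 : ℝ) ≤ Fcs t := by
  rcases le_or_gt t 0 with ht | ht
  · have h0 : (0:ℝ) < exp t := exp_pos t
    have h1 : exp t ≤ 1 := exp_le_one_iff.mpr ht
    set s := exp t
    unfold Fcs
    nlinarith [sq_nonneg (s - 1/6), sq_nonneg ((s - 1/6) * (s-1)), sq_nonneg ((s-1/6)*(s-1)^2), sq_nonneg (s*(s-1)), sq_nonneg s]
  · have h1 : (1:ℝ) ≤ exp t := one_le_exp ht.le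
    have : 0 ≤ Fcs t := by
      unfold Fcs
      have : (0:ℝ) ≤ (exp t - 1) ^ 5 := pow_nonneg (by linarith) 5
      positivity
    linarith

lemma Fcs_abs_le {t : ℝ} (ht : t ≤ 0) : |Fcs t| ≤ exp t := by
  have h1 : exp t ≤ 1 := exp_le_one_iff.mpr ht
  have h0 : (0:ℝ) < exp t := exp_pos t
  unfold Fcs
  rw [abs_mul, abs_of_pos h0, abs_pow]
  have h2 : |exp t - 1| ≤ 1 := by rw [abs_le]; constructor <;> linarith
  have h3 : |exp t - 1| ^ 5 ≤ 1 := pow_le_one₀ (abs_nonneg _) h2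
  nlinarith

noncomputable def Fcs' (t : ℝ) : ℝ :=
  exp t * (exp t - 1) ^ 5 + exp t * (5 * (exp t - 1) ^ 4 * exp t)
noncomputable def FK (M : ℝ) : ℝ :=
  exp M * (exp M + 1) ^ 5 + exp M * (5 * (exp M + 1) ^ 4 * exp M)

lemma Fcs_hasDerivAt (t : ℝ) : HasDerivAt Fcs (Fcs' t) t := by
  have h1 : HasDerivAt (fun t : ℝ => exp t) (exp t) t := Real.hasDerivAt_exp t
  have h2 : HasDerivAt (fun t : ℝ => (exp t - 1) ^ 5)
      ((5:ℕ) * (exp t - 1) ^ 4 * exp t) t := by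
    have := (h1.sub_const 1).pow 5
    simpa [Pi.pow_def] using this
  have h3 := h1.mul h2
  have he : Fcs' t = exp t * (exp t - 1) ^ 5 + exp t * ((5:ℕ) * (exp t - 1) ^ 4 * exp t) := by
    unfold Fcs'; push_cast; ring
  rw [he]
  exact h3

lemma FK_nonneg (M : ℝ) : 0 ≤ FK M := by
  unfold FK
  positivity

lemma Fcs'_le {t M : ℝ} (h : t ≤ M) : Fcs' t ≤ FK M := by
  have h0 : (0:ℝ) < exp t := exp_pos t
  have hM : exp t ≤ exp M := exp_le_exp.mpr h
  have hMp : (0:ℝ) < exp M := exp_pos M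
  have habs : |exp t - 1| ≤ exp M + 1 := by
    rw [abs_le]; constructor <;> nlinarith
  have h5 : (exp t - 1) ^ 5 ≤ (exp M + 1) ^ 5 := by
    calc (exp t - 1) ^ 5 ≤ |(exp t - 1) ^ 5| := le_abs_self _
    _ = |exp t - 1| ^ 5 := by rw [abs_pow]
    _ ≤ (exp M + 1) ^ 5 := pow_le_pow_left₀ (abs_nonneg _) habs 5
  have h4 : (exp t - 1) ^ 4 ≤ (exp M + 1) ^ 4 := by
    calc (exp t - 1) ^ 4 = |exp t - 1| ^ 4 := by rw [← abs_pow, abs_of_nonneg (by positivity)]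
    _ ≤ (exp M + 1) ^ 4 := pow_le_pow_left₀ (abs_nonneg _) habs 4
  have h4n : (0:ℝ) ≤ (exp t - 1) ^ 4 := by positivity
  have hB5 : (0:ℝ) ≤ (exp M + 1) ^ 5 := by positivity
  have hB4 : (0:ℝ) ≤ (exp M + 1) ^ 4 := by positivity
  have s1 : exp t * (exp t - 1) ^ 5 ≤ exp M * (exp M + 1) ^ 5 :=
    calc exp t * (exp t - 1) ^ 5 ≤ exp t * (exp M + 1) ^ 5 :=
          mul_le_mul_of_nonneg_left h5 h0.le
    _ ≤ exp M * (exp M + 1) ^ 5 := mul_le_mul_of_nonneg_right hM hB5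
  have s2 : exp t * (5 * (exp t - 1) ^ 4 * exp t) ≤ exp M * (5 * (exp M + 1) ^ 4 * exp M) := by
    have k1 : (exp t - 1) ^ 4 * exp t ≤ (exp M + 1) ^ 4 * exp M :=
      mul_le_mul h4 hM h0.le hB4
    nlinarith [mul_le_mul k1 hM h0.le (by positivity : (0:ℝ) ≤ (exp M + 1) ^ 4 * exp M)]
  unfold Fcs' FK
  linarith

lemma Fcs_lip {a b M : ℝ} (hab : a ≤ b) (hbM : b ≤ M) :
    Fcs b - Fcs a ≤ FK M * (b - a) := by
  rcases eq_or_lt_of_le hab with rfl | hab'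
  · simp
  · obtain ⟨c, hc, hceq⟩ := exists_hasDerivAt_eq_slope Fcs Fcs' hab'
      (fun x _ => (Fcs_hasDerivAt x).continuousAt.continuousWithinAt)
      (fun x _ => Fcs_hasDerivAt x)
    have hcM : c ≤ M := le_trans hc.2.le hbM
    have := Fcs'_le hcM
    rw [hceq] at this
    have hba : (0:ℝ) < b - a := by linarith
    calc Fcs b - Fcs a = ((Fcs b - Fcs a) / (b-a)) * (b - a) := by field_simp
    _ ≤ FK M * (b - a) := mul_le_mul_of_nonneg_right this hba.le

lemma Fcs_continuous : Continuous Fcs := by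
  unfold Fcs
  continuity

variable {V : Type*} [Fintype V] [Nonempty V] {μ : V → ℝ} {w : V → V → ℝ}

lemma lapl_sub (u v : V → ℝ) (x : V) :
    lapl μ w (u - v) x = lapl μ w u x - lapl μ w v x := by
  unfold lapl
  rw [← mul_sub, ← Finset.sum_sub_distrib]
  congr 1
  apply Finset.sum_congr rfl
  intro y _
  simp [Pi.sub_apply]
  ring

lemma lapl_max_nonpos (hnn : ∀ x y, 0 ≤ w x y) (hmu : ∀ x, 0 < μ x)
    (v : V → ℝ) {x0 : V} (hmax : ∀ x, v x ≤ v x0) : lapl μ w v x0 ≤ 0 := by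
  unfold lapl
  apply mul_nonpos_of_nonneg_of_nonpos
  · exact one_div_nonneg.mpr (hmu x0).le
  · apply Finset.sum_nonpos
    intro y _
    exact mul_nonpos_of_nonneg_of_nonpos (hnn x0 y) (by linarith [hmax y])

/-- Maximum principle for `Δ - K`. -/
lemma max_principle (hnn : ∀ x y, 0 ≤ w x y) (hmu : ∀ x, 0 < μ x)
    {K : ℝ} (hK : 0 < K) {v : V → ℝ}
    (hv : ∀ x, 0 ≤ lapl μ w v x - K * v x) : ∀ x, v x ≤ 0 := by
  obtain ⟨x0, -, hx0⟩ := Finset.exists_max_image Finset.univ v ⟨Classical.arbitrary V, Finset.mem_univ _⟩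
  have hmax : ∀ x, v x ≤ v x0 := fun x => hx0 x (Finset.mem_univ x)
  have h1 : lapl μ w v x0 ≤ 0 := lapl_max_nonpos hnn hmu v hmax
  have h2 := hv x0
  have h3 : v x0 ≤ 0 := by nlinarith
  intro x; linarith [hmax x]

noncomputable def laplK (μ : V → ℝ) (w : V → V → ℝ) (K : ℝ) :
    (V → ℝ) →ₗ[ℝ] (V → ℝ) where
  toFun u := fun x => lapl μ w u x - K * u x
  map_add' u v := by
    funext x
    unfold lapl
    simp only [Pi.add_apply]
    rw [show ∀ a b c d : ℝ, a - b + (c - d) = (a + c) - (b + d) from by intros; ring]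
    congr 1
    · rw [← mul_add, ← Finset.sum_add_distrib]
      congr 1
      apply Finset.sum_congr rfl
      intro y _
      ring
    · ring
  map_smul' c u := by
    funext x
    unfold lapl
    have hs : ∑ y, w x y * ((c • u) y - (c • u) x) = c * ∑ y, w x y * (u y - u x) := by
      rw [Finset.mul_sum]
      exact Finset.sum_congr rfl (fun y _ => by
        simp only [Pi.smul_apply, smul_eq_mul]; ring)
    simp only [RingHom.id_apply, Pi.smul_apply, smul_eq_mul] at hs ⊢
    rw [hs]
    ring

lemma linsolve (hnn : ∀ x y, 0 ≤ w x y) (hmu : ∀ x, 0 < μ x)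
    {K : ℝ} (hK : 0 < K) (g : V → ℝ) :
    ∃ u : V → ℝ, ∀ x, lapl μ w u x - K * u x = g x := by
  have hinj : Function.Injective (laplK μ w K) := by
    rw [injective_iff_map_eq_zero]
    intro v hv
    have h1 : ∀ x, lapl μ w v x - K * v x = 0 := fun x => congrFun hv x
    have h2 : ∀ x, v x ≤ 0 := max_principle hnn hmu hK (fun x => (h1 x).ge)
    have h3 : ∀ x, (-v) x ≤ 0 := by
      apply max_principle hnn hmu hK
      intro x
      have : lapl μ w (0 - v) x - K * ((0 - v) x) = -(lapl μ w v x - K * v x) := by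
        rw [lapl_sub]
        have : lapl μ w (0 : V → ℝ) x = 0 := by
          unfold lapl; simp
        simp [this]; ring
      simp only [zero_sub] at this
      rw [this, h1 x]
      simp
    funext x
    have := h3 x
    simp only [Pi.neg_apply] at this
    have := h2 x
    simp only [Pi.zero_apply]
    linarith
  have hsurj := LinearMap.surjective_of_injective hinj
  obtain ⟨u, hu⟩ := hsurj g
  exact ⟨u, fun x => congrFun hu x⟩

lemma subsuper (hnn : ∀ x y, 0 ≤ w x y) (hmu : ∀ x, 0 < μ x)
    {lam : ℝ} (hlam : 0 ≤ lam) (h a b : V → ℝ)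
    (hab : ∀ x, a x ≤ b x)
    (hsub : ∀ x, lam * Fcs (a x) + h x ≤ lapl μ w a x)
    (hsup : ∀ x, lapl μ w b x ≤ lam * Fcs (b x) + h x) :
    ∃ u : V → ℝ, (∀ x, lapl μ w u x = lam * Fcs (u x) + h x) ∧
      (∀ x, a x ≤ u x ∧ u x ≤ b x) := by
  classical
  obtain ⟨xM, -, hxM⟩ := Finset.exists_max_image Finset.univ b
    ⟨Classical.arbitrary V, Finset.mem_univ _⟩
  set M := b xM with hM
  have hbM : ∀ x, b x ≤ M := fun x => hxM x (Finset.mem_univ x)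
  set K : ℝ := 1 + lam * FK M with hKdef
  have hK : 0 < K := by
    have := FK_nonneg M
    have := mul_nonneg hlam this
    rw [hKdef]; linarith
  have lip : ∀ s t : ℝ, s ≤ t → t ≤ M → lam * (Fcs t - Fcs s) ≤ K * (t - s) := by
    intro s t hst htM
    have h1 : Fcs t - Fcs s ≤ FK M * (t - s) := Fcs_lip hst htM
    have h2 : lam * (Fcs t - Fcs s) ≤ lam * (FK M * (t - s)) :=
      mul_le_mul_of_nonneg_left h1 hlam
    have h3 : lam * (FK M * (t - s)) ≤ K * (t - s) := by
      have hts : 0 ≤ t - s := by linarith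
      rw [hKdef]
      nlinarith
    linarith
  -- the iteration operator
  have hTex : ∀ v : V → ℝ, ∃ u : V → ℝ,
      ∀ x, lapl μ w u x - K * u x = lam * Fcs (v x) + h x - K * v x :=
    fun v => linsolve hnn hmu hK _
  set T : (V → ℝ) → (V → ℝ) := fun v => Classical.choose (hTex v) with hTdef
  have hT : ∀ v x, lapl μ w (T v) x - K * T v x = lam * Fcs (v x) + h x - K * v x :=
    fun v => Classical.choose_spec (hTex v)
  -- comparison helper
  have cmp : ∀ v v' : V → ℝ,
      (∀ x, (lapl μ w v' x - K * v' x) ≤ (lapl μ w v x - K * v x)) →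
      ∀ x, v x ≤ v' x := by
    intro v v' hvv' x
    have := max_principle hnn hmu hK (v := v - v') (fun y => by
      rw [lapl_sub]
      have := hvv' y
      simp only [Pi.sub_apply]
      linarith) x
    simp only [Pi.sub_apply] at this
    linarith
  -- step bounds
  have hTmono : ∀ v v' : V → ℝ, (∀ x, v x ≤ v' x) → (∀ x, v' x ≤ M) →
      ∀ x, T v x ≤ T v' x := by
    intro v v' hvv' hv'M
    apply cmp
    intro x
    rw [hT, hT]
    have := lip (v x) (v' x) (hvv' x) (hv'M x)
    linarith
  have hTa : ∀ v : V → ℝ, (∀ x, a x ≤ v x) → (∀ x, v x ≤ M) →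
      ∀ x, a x ≤ T v x := by
    intro v hav hvM
    apply cmp
    intro x
    rw [hT]
    have h1 := lip (a x) (v x) (hav x) (hvM x)
    have h2 := hsub x
    linarith
  have hTb : ∀ v : V → ℝ, (∀ x, v x ≤ b x) → ∀ x, T v x ≤ b x := by
    intro v hvb
    apply cmp
    intro x
    rw [hT]
    have h1 := lip (v x) (b x) (hvb x) (hbM x)
    have h2 := hsup x
    linarith
  -- the sequence
  obtain ⟨seq, hseq0, hseqS⟩ : ∃ seq : ℕ → V → ℝ,
      seq 0 = a ∧ ∀ n, seq (n + 1) = T (seq n) :=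
    ⟨fun n => Nat.rec a (fun _ v => T v) n, rfl, fun n => rfl⟩
  have claim : ∀ n, (∀ x, a x ≤ seq n x) ∧ (∀ x, seq n x ≤ b x) ∧
      (∀ x, seq n x ≤ seq (n + 1) x) := by
    intro n
    induction n with
    | zero =>
      simp only [hseq0, hseqS]
      refine ⟨fun x => le_refl _, hab, ?_⟩
      apply cmp
      intro x
      rw [hT]
      have := hsub x
      linarith
    | succ n ih =>
      obtain ⟨h1, h2, h3⟩ := ih
      have hM' : ∀ x, seq n x ≤ M := fun x => (h2 x).trans (hbM x)
      have ha' : ∀ x, a x ≤ seq (n+1) x := by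
        rw [hseqS]; exact hTa (seq n) h1 hM'
      have hb' : ∀ x, seq (n+1) x ≤ b x := by
        rw [hseqS]; exact hTb (seq n) h2
      refine ⟨ha', hb', ?_⟩
      have hM'' : ∀ x, seq (n+1) x ≤ M := fun x => (hb' x).trans (hbM x)
      rw [hseqS, hseqS (n+1)]
      exact hTmono (seq n) (seq (n+1)) h3 hM''
  have mono : ∀ x, Monotone fun n => seq n x :=
    fun x => monotone_nat_of_le_succ (fun n => (claim n).2.2 x)
  have bdd : ∀ x, BddAbove (Set.range fun n => seq n x) := by
    intro x
    refine ⟨b x, ?_⟩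
    rintro r ⟨n, rfl⟩
    exact (claim n).2.1 x
  set u : V → ℝ := fun x => ⨆ n, seq n x with hu
  have hconv : ∀ x, Filter.Tendsto (fun n => seq n x) Filter.atTop (nhds (u x)) :=
    fun x => tendsto_atTop_ciSup (mono x) (bdd x)
  have hlapl : ∀ x, Filter.Tendsto (fun n => lapl μ w (seq n) x) Filter.atTop
      (nhds (lapl μ w u x)) := by
    intro x
    have hsum : Filter.Tendsto (fun n => ∑ y, w x y * (seq n y - seq n x))
        Filter.atTop (nhds (∑ y, w x y * (u y - u x))) := by
      apply tendsto_finset_sum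
      intro y _
      exact ((hconv y).sub (hconv x)).const_mul (w x y)
    have := hsum.const_mul (1 / μ x)
    simpa [lapl, mul_comm] using this
  refine ⟨u, ?_, ?_⟩
  · intro x
    have hL : Filter.Tendsto (fun n => lapl μ w (seq (n+1)) x - K * seq (n+1) x)
        Filter.atTop (nhds (lapl μ w u x - K * u x)) := by
      have := (hlapl x).sub ((hconv x).const_mul K)
      exact this.comp (Filter.tendsto_add_atTop_nat 1)
    have hR : Filter.Tendsto (fun n => lam * Fcs (seq n x) + h x - K * seq n x)
        Filter.atTop (nhds (lam * Fcs (u x) + h x - K * u x)) := by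
      have hF : Filter.Tendsto (fun n => Fcs (seq n x)) Filter.atTop (nhds (Fcs (u x))) :=
        (Fcs_continuous.tendsto (u x)).comp (hconv x)
      exact ((hF.const_mul lam).add_const (h x)).sub ((hconv x).const_mul K)
    have heq : (fun n => lapl μ w (seq (n+1)) x - K * seq (n+1) x) =
        fun n => lam * Fcs (seq n x) + h x - K * seq n x := by
      funext n
      rw [hseqS]
      exact hT (seq n) x
    rw [heq] at hL
    have := tendsto_nhds_unique hL hR
    linarith
  · intro x
    constructor
    · have : seq 0 x ≤ u x := le_ciSup (bdd x) 0
      rwa [hseq0] at this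
    · exact ciSup_le (fun n => (claim n).2.1 x)

lemma Fcs_pos {t : ℝ} (ht : 0 < t) : 0 < Fcs t := by
  have h1 : (1:ℝ) < exp t := one_lt_exp_iff.mpr ht
  unfold Fcs
  have : (0:ℝ) < (exp t - 1) ^ 5 := pow_pos (by linarith) 5
  positivity

lemma Fcs_nonpos_imp {t : ℝ} (ht : Fcs t ≤ 0) : t ≤ 0 := by
  by_contra hc
  push_neg at hc
  exact absurd ht (not_le.mpr (Fcs_pos hc))

lemma diracSum_nonneg {N : ℕ} [DecidableEq V] (hmu : ∀ x, 0 < μ x) (p : Fin N → V) (x : V) :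
    0 ≤ 4 * π * ∑ s, dirac μ (p s) x := by
  have h1 : (0:ℝ) ≤ ∑ s, dirac μ (p s) x := by
    apply Finset.sum_nonneg
    intro s _
    unfold dirac
    split
    · exact one_div_nonneg.mpr (hmu _).le
    · exact le_refl 0
  have := pi_pos
  positivity

lemma isSol_iff {N : ℕ} [DecidableEq V] (p : Fin N → V) (lam : ℝ) (u : V → ℝ) :
    isSol μ w p lam u ↔
      ∀ x, lapl μ w u x = lam * Fcs (u x) + 4 * π * ∑ s, dirac μ (p s) x := by
  unfold isSol Fcs
  constructor <;> intro hh x <;> rw [hh x] <;> ring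

lemma sol_nonpos {N : ℕ} [DecidableEq V] (hnn : ∀ x y, 0 ≤ w x y) (hmu : ∀ x, 0 < μ x)
    {p : Fin N → V} {lam : ℝ} (hlam : 0 < lam) {u : V → ℝ}
    (hu : isSol μ w p lam u) : ∀ x, u x ≤ 0 := by
  rw [isSol_iff] at hu
  obtain ⟨x0, -, hx0⟩ := Finset.exists_max_image Finset.univ u
    ⟨Classical.arbitrary V, Finset.mem_univ _⟩
  have hmax : ∀ x, u x ≤ u x0 := fun x => hx0 x (Finset.mem_univ x)
  have h1 : lapl μ w u x0 ≤ 0 := lapl_max_nonpos hnn hmu u hmax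
  have h2 := hu x0
  have h3 := diracSum_nonneg hmu p x0
  have h4 : lam * Fcs (u x0) ≤ 0 := by linarith
  have h5 : Fcs (u x0) ≤ 0 := by
    by_contra hc
    push_neg at hc
    nlinarith [mul_pos hlam hc]
  have h6 : u x0 ≤ 0 := Fcs_nonpos_imp h5
  intro x
  linarith [hmax x]

lemma integ_lapl (hsymm : ∀ x y, w x y = w y x) (hmu : ∀ x, 0 < μ x) (u : V → ℝ) :
    ∑ x, μ x * lapl μ w u x = 0 := by
  have h0 : ∀ x, μ x * lapl μ w u x = ∑ y, w x y * (u y - u x) := by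
    intro x
    unfold lapl
    have := (hmu x).ne'
    field_simp
  rw [Finset.sum_congr rfl (fun x _ => h0 x)]
  have h1 : ∀ x : V, ∑ y, w x y * (u y - u x) =
      (∑ y, w x y * u y) - (∑ y, w x y * u x) := by
    intro x
    rw [← Finset.sum_sub_distrib]
    exact Finset.sum_congr rfl (fun y _ => by ring)
  rw [Finset.sum_congr rfl (fun x _ => h1 x), Finset.sum_sub_distrib]
  have h2 : (∑ x, ∑ y, w x y * u y) = ∑ x, ∑ y, w x y * u x := by
    rw [Finset.sum_comm]
    exact Finset.sum_congr rfl (fun x _ =>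
      Finset.sum_congr rfl (fun y _ => by rw [hsymm]))
  rw [h2, sub_self]

lemma integ_diracSum {N : ℕ} [DecidableEq V] (hmu : ∀ x, 0 < μ x) (p : Fin N → V) :
    ∑ x, μ x * (4 * π * ∑ s, dirac μ (p s) x) = 4 * π * N := by
  have h0 : ∀ q : V, ∑ x, μ x * dirac μ q x = 1 := by
    intro q
    unfold dirac
    rw [Finset.sum_eq_single q]
    · simp [(hmu q).ne']
    · intro x _ hx
      simp [hx]
    · intro hq
      exact absurd (Finset.mem_univ q) hq
  have h1 : ∑ x, μ x * (4 * π * ∑ s, dirac μ (p s) x) =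
      4 * π * ∑ x, ∑ s : Fin N, μ x * dirac μ (p s) x := by
    rw [Finset.mul_sum]
    exact Finset.sum_congr rfl (fun x _ => by
      rw [Finset.mul_sum, Finset.mul_sum, Finset.mul_sum]
      exact Finset.sum_congr rfl (fun s _ => by ring))
  rw [h1, Finset.sum_comm]
  have h2 : ∀ s : Fin N, ∑ x, μ x * dirac μ (p s) x = 1 := fun s => h0 (p s)
  rw [Finset.sum_congr rfl (fun s _ => h2 s)]
  simp

lemma vol_pos (hmu : ∀ x, 0 < μ x) : 0 < vol μ :=
  Finset.sum_pos (fun x _ => hmu x) ⟨Classical.arbitrary V, Finset.mem_univ _⟩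

lemma sol_lam_lower {N : ℕ} [DecidableEq V] (hsymm : ∀ x y, w x y = w y x)
    (hmu : ∀ x, 0 < μ x) {p : Fin N → V} {lam : ℝ} (hlam : 0 < lam) {u : V → ℝ}
    (hu : isSol μ w p lam u) :
    (6 ^ 6 / 5 ^ 5) * (4 * π * N / vol μ) ≤ lam := by
  rw [isSol_iff] at hu
  have h0 : ∑ x, μ x * lapl μ w u x = 0 := integ_lapl hsymm hmu u
  have h1 : ∑ x, μ x * (lam * Fcs (u x) + 4 * π * ∑ s, dirac μ (p s) x) = 0 := by
    rw [← Finset.sum_congr rfl (fun x _ => by rw [hu x] : ∀ x ∈ Finset.univ,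
      μ x * lapl μ w u x = μ x * (lam * Fcs (u x) + 4 * π * ∑ s, dirac μ (p s) x))]
    exact h0
  have h2 : ∑ x, μ x * (lam * Fcs (u x) + 4 * π * ∑ s, dirac μ (p s) x) =
      lam * (∑ x, μ x * Fcs (u x)) + 4 * π * N := by
    rw [← integ_diracSum hmu p, Finset.mul_sum, ← Finset.sum_add_distrib]
    exact Finset.sum_congr rfl (fun x _ => by ring)
  have h3 : lam * (∑ x, μ x * Fcs (u x)) = -(4 * π * N) := by linarith
  have h4 : -(3125 / 46656 : ℝ) * vol μ ≤ ∑ x, μ x * Fcs (u x) := by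
    unfold vol
    rw [Finset.mul_sum]
    apply Finset.sum_le_sum
    intro x _
    have := Fcs_lower (u x)
    nlinarith [hmu x]
  have h5 : lam * (-(3125 / 46656 : ℝ) * vol μ) ≤ lam * ∑ x, μ x * Fcs (u x) :=
    mul_le_mul_of_nonneg_left h4 hlam.le
  have hvol := vol_pos hmu
  have hNn : (0:ℝ) ≤ (N:ℝ) := Nat.cast_nonneg N
  have hpi := pi_pos
  rw [h3] at h5
  have h6 : 4 * π * N ≤ lam * (3125 / 46656) * vol μ := by nlinarith
  rw [mul_div_assoc', div_le_iff₀ hvol]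
  nlinarith


lemma mul_lapl (hmu : ∀ x, 0 < μ x) (u : V → ℝ) (x : V) :
    μ x * lapl μ w u x = ∑ y, w x y * (u y - u x) := by
  unfold lapl
  have := (hmu x).ne'
  field_simp

lemma sol_integral {N : ℕ} [DecidableEq V] (hsymm : ∀ x y, w x y = w y x)
    (hmu : ∀ x, 0 < μ x) {p : Fin N → V} {lam : ℝ} {u : V → ℝ}
    (hu : isSol μ w p lam u) :
    lam * (∑ x, μ x * Fcs (u x)) = -(4 * π * N) := by
  rw [isSol_iff] at hu
  have h0 : ∑ x, μ x * lapl μ w u x = 0 := integ_lapl hsymm hmu u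
  have h1 : ∑ x, μ x * (lam * Fcs (u x) + 4 * π * ∑ s, dirac μ (p s) x) = 0 := by
    rw [← Finset.sum_congr rfl (fun x _ => by rw [hu x] : ∀ x ∈ Finset.univ,
      μ x * lapl μ w u x = μ x * (lam * Fcs (u x) + 4 * π * ∑ s, dirac μ (p s) x))]
    exact h0
  have h2 : ∑ x, μ x * (lam * Fcs (u x) + 4 * π * ∑ s, dirac μ (p s) x) =
      lam * (∑ x, μ x * Fcs (u x)) + 4 * π * N := by
    rw [← integ_diracSum hmu p, Finset.mul_sum, ← Finset.sum_add_distrib]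
    exact Finset.sum_congr rfl (fun x _ => by ring)
  linarith

lemma sol_max_lower {N : ℕ} [DecidableEq V] (hsymm : ∀ x y, w x y = w y x)
    (hnn : ∀ x y, 0 ≤ w x y) (hmu : ∀ x, 0 < μ x) (hN : 1 ≤ N)
    {p : Fin N → V} {lam lam1 : ℝ} (hlam : 0 < lam) (hll : lam ≤ lam1)
    {u : V → ℝ} (hu : isSol μ w p lam u) {x0 : V} (hx0 : ∀ x, u x ≤ u x0) :
    Real.log (4 * π * N / (lam1 * vol μ)) ≤ u x0 := by
  have hint := sol_integral hsymm hmu hu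
  have hup := sol_nonpos hnn hmu hlam hu
  have hvol := vol_pos hmu
  have hpi := pi_pos
  have hN1 : (1:ℝ) ≤ (N:ℝ) := by exact_mod_cast hN
  have hb : ∑ x, μ x * (-(Fcs (u x))) ≤ vol μ * exp (u x0) := by
    have : ∀ x : V, μ x * (-(Fcs (u x))) ≤ μ x * exp (u x0) := by
      intro x
      have h1 : |Fcs (u x)| ≤ exp (u x) := Fcs_abs_le (hup x)
      have h2 : exp (u x) ≤ exp (u x0) := exp_le_exp.mpr (hx0 x)
      have h3 : -(Fcs (u x)) ≤ |Fcs (u x)| := neg_le_abs _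
      exact mul_le_mul_of_nonneg_left (by linarith) (hmu x).le
    calc ∑ x, μ x * (-(Fcs (u x))) ≤ ∑ x, μ x * exp (u x0) :=
          Finset.sum_le_sum (fun x _ => this x)
    _ = vol μ * exp (u x0) := by rw [vol, Finset.sum_mul]
  have hsumneg : ∑ x, μ x * (-(Fcs (u x))) = -(∑ x, μ x * Fcs (u x)) := by
    rw [← Finset.sum_neg_distrib]
    exact Finset.sum_congr rfl (fun x _ => by ring)
  have hkey : 4 * π * N ≤ lam1 * vol μ * exp (u x0) := by
    have h4 : lam * (-(∑ x, μ x * Fcs (u x))) = 4 * π * N := by linarith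
    have h5 : -(∑ x, μ x * Fcs (u x)) ≤ vol μ * exp (u x0) := by
      rw [← hsumneg]; exact hb
    have h6 : 0 ≤ vol μ * exp (u x0) := by positivity
    nlinarith [exp_pos (u x0)]
  have hl1 : (0:ℝ) < lam1 := lt_of_lt_of_le hlam hll
  have hc : (0:ℝ) < 4 * π * N / (lam1 * vol μ) := by
    apply div_pos (by nlinarith) (by positivity)
  have hle : 4 * π * N / (lam1 * vol μ) ≤ exp (u x0) := by
    rw [div_le_iff₀ (by positivity : (0:ℝ) < lam1 * vol μ)]
    linarith
  calc Real.log (4 * π * N / (lam1 * vol μ)) ≤ Real.log (exp (u x0)) :=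
        Real.log_le_log hc hle
  _ = u x0 := Real.log_exp _

lemma exists_boundary_edge (hconn : ∀ x y : V, Relation.ReflTransGen (fun a b => 0 < w a b) x y)
    {A : Finset V} {x0 y0 : V} (hx0 : x0 ∈ A) (hy0 : y0 ∉ A) :
    ∃ x ∈ A, ∃ y, y ∉ A ∧ 0 < w x y := by
  have key : ∀ a : V, Relation.ReflTransGen (fun s t => 0 < w s t) a y0 → a ∈ A →
      ∃ x ∈ A, ∃ y, y ∉ A ∧ 0 < w x y := by
    intro a hrel
    induction hrel using Relation.ReflTransGen.head_induction_on with
    | refl => intro ha; exact absurd ha hy0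
    | head h' hrel ih =>
      rename_i a' c'
      intro ha
      by_cases hc : c' ∈ A
      · exact ih hc
      · exact ⟨a', ha, c', hc, h'⟩
  exact key x0 (hconn x0 y0) hx0

lemma apriori {N : ℕ} [DecidableEq V] (hsymm : ∀ x y, w x y = w y x)
    (hnn : ∀ x y, 0 ≤ w x y) (hmu : ∀ x, 0 < μ x)
    (hconn : ∀ x y : V, Relation.ReflTransGen (fun a b => 0 < w a b) x y)
    (hN : 1 ≤ N) (p : Fin N → V) {lam1 : ℝ} (hl1 : 0 < lam1) :
    ∃ m0 : ℝ, ∀ lam : ℝ, 0 < lam → lam ≤ lam1 → ∀ u : V → ℝ, isSol μ w p lam u →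
      ∀ x, m0 ≤ u x := by
  classical
  have hpi := pi_pos
  have hvol := vol_pos (μ := μ) hmu
  -- constants
  set m1 : ℝ := min 0 (Real.log (4 * π * N / (lam1 * vol μ))) with hm1
  set B : ℝ := lam1 * (3125 / 46656) with hB
  have hBpos : 0 < B := by rw [hB]; positivity
  obtain ⟨xm, -, hxm⟩ := Finset.exists_max_image Finset.univ μ
    ⟨Classical.arbitrary V, Finset.mem_univ _⟩
  set μmax := μ xm with hμmax
  have hμmaxpos : 0 < μmax := hmu xm
  have hμle : ∀ x, μ x ≤ μmax := fun x => hxm x (Finset.mem_univ x)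
  obtain ⟨xw, -, hxw⟩ := Finset.exists_max_image Finset.univ (fun x => ∑ y, w x y)
    ⟨Classical.arbitrary V, Finset.mem_univ _⟩
  set Wmax : ℝ := ∑ y, w xw y with hWmax
  have hWle : ∀ x, (∑ y, w x y) ≤ Wmax := fun x => hxw x (Finset.mem_univ x)
  have hWnn : 0 ≤ Wmax := by
    rw [hWmax]
    exact Finset.sum_nonneg (fun y _ => hnn xw y)
  obtain ⟨wmin, hwminpos, hwminle⟩ : ∃ wm : ℝ, 0 < wm ∧ ∀ x y, 0 < w x y → wm ≤ w x y := by
    by_cases hne : (Finset.univ.filter (fun q : V × V => 0 < w q.1 q.2)).Nonempty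
    · obtain ⟨q0, hq0mem, hq0⟩ := Finset.exists_min_image _ (fun q : V × V => w q.1 q.2) hne
      refine ⟨w q0.1 q0.2, (Finset.mem_filter.mp hq0mem).2, ?_⟩
      intro x y hxy
      exact hq0 (x, y) (Finset.mem_filter.mpr ⟨Finset.mem_univ _, hxy⟩)
    · refine ⟨1, one_pos, fun x y hxy => ?_⟩
      exact absurd ⟨(x, y), Finset.mem_filter.mpr ⟨Finset.mem_univ _, hxy⟩⟩ hne
  -- the barrier sequence
  obtain ⟨c, hc0, hcS⟩ : ∃ c : ℕ → ℝ, c 0 = m1 ∧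
      ∀ k, c (k + 1) = c k - (μmax * B + Wmax * (-(c k))) / wmin :=
    ⟨fun k => Nat.rec m1 (fun _ ck => ck - (μmax * B + Wmax * (-ck)) / wmin) k, rfl,
      fun k => rfl⟩
  have hm1le : m1 ≤ 0 := min_le_left _ _
  have hcfacts : ∀ k, c k ≤ 0 ∧ c (k + 1) ≤ c k := by
    intro k
    induction k with
    | zero =>
      refine ⟨hc0 ▸ hm1le, ?_⟩
      rw [hcS, hc0]
      have : 0 ≤ (μmax * B + Wmax * (-m1)) / wmin := by
        apply div_nonneg _ hwminpos.le
        have : 0 ≤ -m1 := by linarith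
        positivity
      linarith
    | succ k ih =>
      have h1 : c (k + 1) ≤ 0 := le_trans ih.2 ih.1
      refine ⟨h1, ?_⟩
      rw [hcS (k + 1)]
      have : 0 ≤ (μmax * B + Wmax * (-(c (k + 1)))) / wmin := by
        apply div_nonneg _ hwminpos.le
        have : 0 ≤ -(c (k + 1)) := by linarith
        positivity
      linarith
  set n := Fintype.card V with hn
  refine ⟨c n, ?_⟩
  intro lam hlam hll u hu
  have hup : ∀ x, u x ≤ 0 := sol_nonpos hnn hmu hlam hu
  obtain ⟨x0, -, hx0⟩ := Finset.exists_max_image Finset.univ u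
    ⟨Classical.arbitrary V, Finset.mem_univ _⟩
  have hmax : ∀ x, u x ≤ u x0 := fun x => hx0 x (Finset.mem_univ x)
  have hx0low : m1 ≤ u x0 :=
    le_trans (min_le_right _ _) (sol_max_lower hsymm hnn hmu hN hlam hll hu hmax)
  -- the level sets
  set A : ℕ → Finset V := fun k => Finset.univ.filter (fun x => c k ≤ u x) with hA
  have hmemA : ∀ k x, x ∈ A k ↔ c k ≤ u x := by
    intro k x
    rw [hA]
    simp
  have hAsub : ∀ k, A k ⊆ A (k + 1) := by
    intro k x hx
    rw [hmemA] at hx ⊢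
    linarith [(hcfacts k).2]
  -- growth step
  have hgrow : ∀ k, A k ≠ Finset.univ → (A k).Nonempty → (A (k+1) \ A k).Nonempty := by
    intro k hknu ⟨x1, hx1⟩
    obtain ⟨y0, hy0⟩ : ∃ y0, y0 ∉ A k := by
      by_contra hcon
      push_neg at hcon
      exact hknu (Finset.eq_univ_iff_forall.mpr hcon)
    obtain ⟨x, hxA, y, hyA, hwxy⟩ := exists_boundary_edge hconn hx1 hy0
    rw [hmemA] at hxA
    -- estimate u y
    have hckle0 : c k ≤ 0 := (hcfacts k).1
    have heq := mul_lapl (w := w) hmu u x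
    have hlapl_low : -(μmax * B) ≤ μ x * lapl μ w u x := by
      rw [isSol_iff] at hu
      rw [hu x]
      have h1 : -(lam1 * (3125/46656)) ≤ lam * Fcs (u x) := by
        have hF := Fcs_lower (u x)
        nlinarith
      have h2 := diracSum_nonneg hmu p x
      have h3 : -(B) ≤ lam * Fcs (u x) + 4 * π * ∑ s, dirac μ (p s) x := by
        rw [hB]; linarith
      have h4 : μ x * (-(B)) ≤ μ x * (lam * Fcs (u x) + 4 * π * ∑ s, dirac μ (p s) x) :=
        mul_le_mul_of_nonneg_left h3 (hmu x).le
      have h5 : -(μmax * B) ≤ μ x * (-B) := by nlinarith [hμle x, hmu x]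
      linarith
    have hsplit : ∑ y', w x y' * (u y' - u x) =
        w x y * (u y - u x) + ∑ y' ∈ Finset.univ.erase y, w x y' * (u y' - u x) := by
      rw [add_comm, Finset.sum_erase_add Finset.univ _ (Finset.mem_univ y)]
    have hrest : ∑ y' ∈ Finset.univ.erase y, w x y' * (u y' - u x) ≤ Wmax * (-(c k)) := by
      have hterm : ∀ y' ∈ Finset.univ.erase y, w x y' * (u y' - u x) ≤ w x y' * (-(c k)) := by
        intro y' _
        apply mul_le_mul_of_nonneg_left _ (hnn x y')
        have := hup y'
        linarith
      calc ∑ y' ∈ Finset.univ.erase y, w x y' * (u y' - u x)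
          ≤ ∑ y' ∈ Finset.univ.erase y, w x y' * (-(c k)) := Finset.sum_le_sum hterm
      _ ≤ ∑ y', w x y' * (-(c k)) := by
          apply Finset.sum_le_sum_of_subset_of_nonneg (Finset.erase_subset _ _)
          intro y' _ _
          have : 0 ≤ -(c k) := by linarith
          exact mul_nonneg (hnn x y') this
      _ = (∑ y', w x y') * (-(c k)) := by rw [Finset.sum_mul]
      _ ≤ Wmax * (-(c k)) := by
          apply mul_le_mul_of_nonneg_right (hWle x)
          linarith
    have hDpos : 0 ≤ μmax * B + Wmax * (-(c k)) := by
      have : 0 ≤ -(c k) := by linarith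
      positivity
    have hwed : w x y * (u y - u x) ≥ -(μmax * B + Wmax * (-(c k))) := by
      have := heq ▸ hlapl_low
      linarith [hsplit ▸ this]
    have huy : c (k + 1) ≤ u y := by
      have h1 : -(μmax * B + Wmax * (-(c k))) / w x y ≤ u y - u x := by
        rw [div_le_iff₀ hwxy]
        calc -(μmax * B + Wmax * (-(c k))) ≤ w x y * (u y - u x) := hwed
        _ = (u y - u x) * w x y := by ring
      have h2 : (μmax * B + Wmax * (-(c k))) / w x y ≤
          (μmax * B + Wmax * (-(c k))) / wmin := by
        apply div_le_div_of_nonneg_left hDpos hwminpos (hwminle x y hwxy)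
      have h1' : -((μmax * B + Wmax * (-(c k))) / w x y) ≤ u y - u x := by
        rw [← neg_div]; exact h1
      have h3 : -((μmax * B + Wmax * (-(c k))) / wmin) ≤ u y - u x := by
        linarith
      rw [hcS]
      have : c k ≤ u x := hxA
      rw [sub_eq_add_neg]
      linarith
    refine ⟨y, Finset.mem_sdiff.mpr ⟨?_, hyA⟩⟩
    rw [hmemA]
    exact huy
  -- cardinality induction
  have hcard : ∀ k, A k = Finset.univ ∨ k + 1 ≤ (A k).card := by
    intro k
    induction k with
    | zero =>
      right
      have : x0 ∈ A 0 := by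
        rw [hmemA, hc0]
        exact hx0low
      exact Finset.card_pos.mpr ⟨x0, this⟩
    | succ k ih =>
      by_cases hk : A (k + 1) = Finset.univ
      · exact Or.inl hk
      · right
        rcases ih with h | h
        · exact absurd (Finset.univ_subset_iff.mp (h ▸ hAsub k)) hk
        · have hne : (A k).Nonempty := Finset.card_pos.mp (by omega)
          have hknu : A k ≠ Finset.univ := by
            intro hcon
            exact hk (Finset.univ_subset_iff.mp (hcon ▸ hAsub k))
          obtain ⟨y, hy⟩ := hgrow k hknu hne
          rw [Finset.mem_sdiff] at hy
          have hss : A k ⊂ A (k + 1) :=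
            Finset.ssubset_iff_of_subset (hAsub k) |>.mpr ⟨y, hy.1, hy.2⟩
          have := Finset.card_lt_card hss
          omega
  -- conclude
  rcases hcard n with h | h
  · intro x
    have : x ∈ A n := h ▸ Finset.mem_univ x
    rwa [hmemA] at this
  · exfalso
    have h2 : (A n).card ≤ n := hn ▸ Finset.card_le_univ (A n)
    omega


lemma lapl_const (c : ℝ) (x : V) : lapl μ w (fun _ => c) x = 0 := by
  unfold lapl; simp

lemma lapl_tendsto {v : ℕ → V → ℝ} {u : V → ℝ}
    (hconv : ∀ y, Filter.Tendsto (fun n => v n y) Filter.atTop (nhds (u y))) (x : V) :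
    Filter.Tendsto (fun n => lapl μ w (v n) x) Filter.atTop (nhds (lapl μ w u x)) := by
  have hsum : Filter.Tendsto (fun n => ∑ y, w x y * (v n y - v n x))
      Filter.atTop (nhds (∑ y, w x y * (u y - u x))) := by
    apply tendsto_finset_sum
    intro y _
    exact ((hconv y).sub (hconv x)).const_mul (w x y)
  have := hsum.const_mul (1 / μ x)
  simpa [lapl, mul_comm] using this

lemma dirac_le {q x : V} (hmu : ∀ x, 0 < μ x) [DecidableEq V] :
    dirac μ q x ≤ 1 / μ q := by
  unfold dirac
  split
  · exact le_refl _
  · exact one_div_nonneg.mpr (hmu q).le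

lemma Fcs_neg_log6 : Fcs (-Real.log 6) = -(3125 / 46656 : ℝ) := by
  unfold Fcs
  rw [Real.exp_neg, Real.exp_log (by norm_num : (0:ℝ) < 6)]
  norm_num

lemma Fcs_zero : Fcs 0 = 0 := by
  unfold Fcs
  simp

end Aux

/-- there exists `λ̂ ≥ (6^6/5^5)·(4πN/Vol(V))` such that the generalized
Chern–Simons equation has a solution for every `λ ≥ λ̂` and no solution for `0 < λ < λ̂`. -/
theorem critical_value_dichotomy {V : Type*} [Fintype V] [DecidableEq V] [Nonempty V]
    (w : V → V → ℝ) (μ : V → ℝ)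
    (hsymm : ∀ x y, w x y = w y x) (hnn : ∀ x y, 0 ≤ w x y)
    (hconn : ∀ x y : V, Relation.ReflTransGen (fun a b => 0 < w a b) x y)
    (hmu : ∀ x, 0 < μ x)
    (N : ℕ) (hN : 1 ≤ N) (p : Fin N → V) (hp : Function.Injective p) :
    ∃ lamhat : ℝ,
      lamhat ≥ (6 ^ 6 / 5 ^ 5) * (4 * π * N / vol μ) ∧
      (∀ lam : ℝ, lamhat ≤ lam → ∃ u : V → ℝ, isSol μ w p lam u) ∧
      (∀ lam : ℝ, 0 < lam → lam < lamhat → ¬ ∃ u : V → ℝ, isSol μ w p lam u) := by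
  classical
  have hvol := vol_pos (μ := μ) hmu
  have hpi := pi_pos
  have hN1 : (1:ℝ) ≤ (N:ℝ) := by exact_mod_cast hN
  set C : ℝ := (6 ^ 6 / 5 ^ 5) * (4 * π * N / vol μ) with hC
  have hCpos : 0 < C := by
    rw [hC]
    apply mul_pos (by norm_num)
    exact div_pos (by nlinarith) hvol
  -- explicit large lambda threshold
  set lam0 : ℝ := (46656 / 3125) * (4 * π * ∑ s : Fin N, 1 / μ (p s)) with hlam0
  have hsum_pos : 0 < ∑ s : Fin N, 1 / μ (p s) := by
    apply Finset.sum_pos (fun s _ => one_div_pos.mpr (hmu (p s)))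
    exact ⟨⟨0, by omega⟩, Finset.mem_univ _⟩
  have hlam0pos : 0 < lam0 := by
    rw [hlam0]
    apply mul_pos (by norm_num)
    positivity
  have hdirac_le : ∀ x, (∑ s : Fin N, dirac μ (p s) x) ≤ ∑ s : Fin N, 1 / μ (p s) :=
    fun x => Finset.sum_le_sum (fun s _ => dirac_le hmu)
  -- solvability for lam ≥ lam0
  have hsolve_big : ∀ lam : ℝ, lam0 ≤ lam → ∃ u : V → ℝ, isSol μ w p lam u := by
    intro lam hlam
    have hlampos : 0 < lam := lt_of_lt_of_le hlam0pos hlam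
    obtain ⟨u, hueq, -⟩ := subsuper hnn hmu hlampos.le
      (fun x => 4 * π * ∑ s, dirac μ (p s) x)
      (fun _ => -Real.log 6) (fun _ => 0)
      (fun x => by
        show -Real.log 6 ≤ (0:ℝ)
        have : (0:ℝ) ≤ Real.log 6 := Real.log_nonneg (by norm_num)
        linarith)
      (fun x => by
        show lam * Fcs (-Real.log 6) + (4 * π * ∑ s : Fin N, dirac μ (p s) x) ≤
          lapl μ w (fun _ => -Real.log 6) x
        rw [lapl_const, Fcs_neg_log6]
        have h1 := hdirac_le x
        have h2 : 4 * π * ∑ s : Fin N, dirac μ (p s) x ≤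
            4 * π * ∑ s : Fin N, 1 / μ (p s) :=
          mul_le_mul_of_nonneg_left h1 (by positivity)
        rw [hlam0] at hlam
        nlinarith)
      (fun x => by
        show lapl μ w (fun _ => (0:ℝ)) x ≤ lam * Fcs 0 + (4 * π * ∑ s : Fin N, dirac μ (p s) x)
        rw [lapl_const, Fcs_zero]
        have := diracSum_nonneg hmu p x
        nlinarith)
    exact ⟨u, (isSol_iff p lam u).mpr hueq⟩
  -- upward closedness
  have hupward : ∀ lam lam' : ℝ, 0 < lam' → (∃ u : V → ℝ, isSol μ w p lam' u) →
      lam' ≤ lam → ∃ u : V → ℝ, isSol μ w p lam u := by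
    intro lam lam' hl' hex hle
    obtain ⟨u', hu'⟩ := hex
    have hlampos : 0 < lam := lt_of_lt_of_le hl' hle
    have hu'np := sol_nonpos hnn hmu hl' hu'
    rw [isSol_iff] at hu'
    obtain ⟨u, hueq, -⟩ := subsuper hnn hmu hlampos.le
      (fun x => 4 * π * ∑ s, dirac μ (p s) x) u' (fun _ => 0)
      (fun x => by
        show u' x ≤ (0:ℝ)
        exact hu'np x)
      (fun x => by
        show lam * Fcs (u' x) + (4 * π * ∑ s : Fin N, dirac μ (p s) x) ≤ lapl μ w u' x
        rw [hu' x]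
        have hF : Fcs (u' x) ≤ 0 := Fcs_nonpos (hu'np x)
        nlinarith)
      (fun x => by
        show lapl μ w (fun _ => (0:ℝ)) x ≤ lam * Fcs 0 + (4 * π * ∑ s : Fin N, dirac μ (p s) x)
        rw [lapl_const, Fcs_zero]
        have := diracSum_nonneg hmu p x
        nlinarith)
    exact ⟨u, (isSol_iff p lam u).mpr hueq⟩
  -- the solvability set
  set S : Set ℝ := {lam | 0 < lam ∧ ∃ u : V → ℝ, isSol μ w p lam u} with hS
  have hlam0S : lam0 ∈ S := ⟨hlam0pos, hsolve_big lam0 le_rfl⟩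
  have hSne : S.Nonempty := ⟨lam0, hlam0S⟩
  have hSlow : ∀ lam ∈ S, C ≤ lam := by
    rintro lam ⟨hl, u, hu⟩
    rw [hC]
    exact sol_lam_lower hsymm hmu hl hu
  have hSbdd : BddBelow S := ⟨C, hSlow⟩
  set lamhat : ℝ := sInf S with hlamhat
  have hCle : C ≤ lamhat := le_csInf hSne hSlow
  have hlamhatpos : 0 < lamhat := lt_of_lt_of_le hCpos hCle
  -- solvability above lamhat
  have hsolve_gt : ∀ lam : ℝ, lamhat < lam → ∃ u : V → ℝ, isSol μ w p lam u := by
    intro lam hl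
    obtain ⟨lam', hl'S, hl'lt⟩ := exists_lt_of_csInf_lt hSne hl
    exact hupward lam lam' hl'S.1 hl'S.2 hl'lt.le
  -- solvability at lamhat via compactness
  have hsolve_hat : ∃ u : V → ℝ, isSol μ w p lamhat u := by
    set lam1 : ℝ := lamhat + 1 with hlam1
    have hl1 : 0 < lam1 := by rw [hlam1]; linarith
    obtain ⟨m0, hm0⟩ := apriori hsymm hnn hmu hconn hN p hl1
    set lamn : ℕ → ℝ := fun n => lamhat + 1 / ((n : ℝ) + 1) with hlamn
    have hlamn_gt : ∀ n, lamhat < lamn n := by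
      intro n
      rw [hlamn]
      have : (0:ℝ) < 1 / ((n : ℝ) + 1) := by positivity
      linarith
    have hlamn_pos : ∀ n, 0 < lamn n := fun n => lt_trans hlamhatpos (hlamn_gt n)
    have hlamn_le : ∀ n, lamn n ≤ lam1 := by
      intro n
      rw [hlamn, hlam1]
      have h1 : 1 / ((n : ℝ) + 1) ≤ 1 := by
        rw [div_le_one (by positivity)]
        have : (0:ℝ) ≤ (n : ℝ) := Nat.cast_nonneg n
        linarith
      linarith
    have hseqex : ∀ n : ℕ, ∃ u : V → ℝ, isSol μ w p (lamn n) u :=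
      fun n => hsolve_gt _ (hlamn_gt n)
    choose us hus using hseqex
    have hbox : ∀ n, us n ∈ Set.Icc (fun _ => m0 : V → ℝ) (0 : V → ℝ) := by
      intro n
      rw [Set.mem_Icc]
      constructor
      · intro x
        exact hm0 (lamn n) (hlamn_pos n) (hlamn_le n) (us n) (hus n) x
      · intro x
        exact sol_nonpos hnn hmu (hlamn_pos n) (hus n) x
    obtain ⟨uinf, -, φ, hφmono, hφconv⟩ := (isCompact_Icc).tendsto_subseq hbox
    have hcoord : ∀ x, Filter.Tendsto (fun j => us (φ j) x) Filter.atTop (nhds (uinf x)) :=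
      fun x => tendsto_pi_nhds.mp hφconv x
    have hlamconv : Filter.Tendsto (fun j => lamn (φ j)) Filter.atTop (nhds lamhat) := by
      have h0 : Filter.Tendsto (fun n : ℕ => 1 / ((n : ℝ) + 1)) Filter.atTop (nhds 0) :=
        tendsto_one_div_add_atTop_nhds_zero_nat
      have h1 : Filter.Tendsto (fun j : ℕ => 1 / ((φ j : ℝ) + 1)) Filter.atTop (nhds 0) :=
        h0.comp hφmono.tendsto_atTop
      have h2 := h1.const_add lamhat
      rw [add_zero] at h2
      exact h2
    refine ⟨uinf, (isSol_iff p lamhat uinf).mpr ?_⟩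
    intro x
    have hL : Filter.Tendsto (fun j => lapl μ w (us (φ j)) x) Filter.atTop
        (nhds (lapl μ w uinf x)) := lapl_tendsto hcoord x
    have hR : Filter.Tendsto
        (fun j => lamn (φ j) * Fcs (us (φ j) x) + 4 * π * ∑ s, dirac μ (p s) x)
        Filter.atTop (nhds (lamhat * Fcs (uinf x) + 4 * π * ∑ s, dirac μ (p s) x)) := by
      have hF : Filter.Tendsto (fun j => Fcs (us (φ j) x)) Filter.atTop
          (nhds (Fcs (uinf x))) := (Fcs_continuous.tendsto (uinf x)).comp (hcoord x)
      exact (hlamconv.mul hF).add_const _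
    have heq : (fun j => lapl μ w (us (φ j)) x) =
        fun j => lamn (φ j) * Fcs (us (φ j) x) + 4 * π * ∑ s, dirac μ (p s) x := by
      funext j
      exact ((isSol_iff p (lamn (φ j)) (us (φ j))).mp (hus (φ j))) x
    rw [heq] at hL
    exact tendsto_nhds_unique hL hR
  refine ⟨lamhat, hCle, ?_, ?_⟩
  · intro lam hle
    rcases eq_or_lt_of_le hle with rfl | hlt
    · exact hsolve_hat
    · exact hsolve_gt lam hlt
  · rintro lam hpos hlt ⟨u, hu⟩
    have : lamhat ≤ lam := csInf_le hSbdd ⟨hpos, u, hu⟩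
    linarith
end
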